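/- Let R be a rectangle in ℂ and let f : ℂ → ℂ be complex differentiable at every point of R. Then for every ε > 0 and every rectangle S contained in the interior of R there exists δ > 0 such that for all z, x ∈ S with z ≠ x and |z − x| < δ one has |f'(z) − (f(z) − f(x))/(z − x)| < ε. -/

import Mathlib

open Set

theorem deriv_uniformly_approximated_by_difference_quotients
    (α β γ δ : ℝ) (hαβ : α < β) (hγδ : γ < δ) (f : ℂ → ℂ)
    (hf : ∀ z ∈ {z : ℂ | z.re ∈ Icc α β ∧ z.im ∈ Icc γ δ}, DifferentiableAt ℂ f z)
    (ε : ℝ) (hε : 0 < ε)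
    (α' β' γ' δ' : ℝ) (hαβ' : α' < β') (hγδ' : γ' < δ')
    (hS : {z : ℂ | z.re ∈ Icc α' β' ∧ z.im ∈ Icc γ' δ'} ⊆
      {z : ℂ | z.re ∈ Ioo α β ∧ z.im ∈ Ioo γ δ}) :
    ∃ d : ℝ, 0 < d ∧ ∀ z ∈ {z : ℂ | z.re ∈ Icc α' β' ∧ z.im ∈ Icc γ' δ'},
      ∀ x ∈ {z : ℂ | z.re ∈ Icc α' β' ∧ z.im ∈ Icc γ' δ'},
        z ≠ x → ‖z - x‖ < d →
          ‖deriv f z - (f z - f x) / (z - x)‖ < ε := by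
  set S : Set ℂ := {z : ℂ | z.re ∈ Icc α' β' ∧ z.im ∈ Icc γ' δ'} with hSdef
  set U : Set ℂ := {z : ℂ | z.re ∈ Ioo α β ∧ z.im ∈ Ioo γ δ} with hUdef
  have hU : IsOpen U := by
    have : U = Complex.re ⁻¹' Ioo α β ∩ Complex.im ⁻¹' Ioo γ δ := rfl
    rw [this]
    exact (isOpen_Ioo.preimage Complex.continuous_re).inter
      (isOpen_Ioo.preimage Complex.continuous_im)
  have hSU : S ⊆ U := hS
  -- f is analytic on U, hence deriv f is continuous on U
  have hfd : DifferentiableOn ℂ f U := fun z hz =>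
    (hf z ⟨Ioo_subset_Icc_self hz.1, Ioo_subset_Icc_self hz.2⟩).differentiableWithinAt
  have hderiv_cont : ContinuousOn (deriv f) U :=
    ((hfd.analyticOnNhd hU).deriv).continuousOn
  -- S is compact
  have hSc : IsCompact S := by
    have hSeq : S = Icc α' β' ×ℂ Icc γ' δ' := by
      ext z; exact (Complex.mem_reProdIm).symm
    rw [hSeq]
    exact Metric.isCompact_of_isClosed_isBounded
      (isClosed_Icc.reProdIm isClosed_Icc)
      ((Metric.isBounded_Icc _ _).reProdIm (Metric.isBounded_Icc _ _))
  -- S is convex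
  have hconv : Convex ℝ S := by
    intro a ha b hb p q hp hq hpq
    constructor
    · have := (convex_Icc α' β') ha.1 hb.1 hp hq hpq
      simpa [Complex.add_re, Complex.smul_re] using this
    · have := (convex_Icc γ' δ') ha.2 hb.2 hp hq hpq
      simpa [Complex.add_im, Complex.smul_im] using this
  -- uniform continuity of deriv f on S
  have hu : UniformContinuousOn (deriv f) S :=
    hSc.uniformContinuousOn_of_continuous (hderiv_cont.mono hSU)
  rw [Metric.uniformContinuousOn_iff] at hu
  obtain ⟨d, hd, hud⟩ := hu (ε / 2) (by linarith)
  refine ⟨d, hd, ?_⟩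
  intro z hz x hx hne hlt
  have hzx : z - x ≠ 0 := sub_ne_zero.mpr hne
  -- work on the convex set s = S ∩ ball z d
  set s : Set ℂ := S ∩ Metric.ball z d with hsdef
  have hconvs : Convex ℝ s := hconv.inter (convex_ball z d)
  have hzs : z ∈ s := ⟨hz, Metric.mem_ball_self hd⟩
  have hxs : x ∈ s := ⟨hx, by
    rw [Metric.mem_ball, Complex.dist_eq]
    rwa [norm_sub_rev]⟩
  set g : ℂ → ℂ := fun w => f w - deriv f z * w with hgdef
  have hg : ∀ w ∈ s, HasDerivWithinAt g (deriv f w - deriv f z) s w := by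
    intro w hw
    have h1 : HasDerivAt f (deriv f w) w :=
      (hf w (by
        have := hSU hw.1
        exact ⟨Ioo_subset_Icc_self this.1, Ioo_subset_Icc_self this.2⟩)).hasDerivAt
    have h2 : HasDerivAt (fun w : ℂ => deriv f z * w) (deriv f z) w := by
      simpa using (hasDerivAt_id w).const_mul (deriv f z)
    exact (h1.sub h2).hasDerivWithinAt
  have bound : ∀ w ∈ s, ‖deriv f w - deriv f z‖ ≤ ε / 2 := by
    intro w hw
    have hdist : dist w z < d := hw.2
    have := hud w hw.1 z hz hdist
    rw [dist_eq_norm] at this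
    exact this.le
  have key : ‖g z - g x‖ ≤ (ε / 2) * ‖z - x‖ :=
    hconvs.norm_image_sub_le_of_norm_hasDerivWithin_le hg bound hxs hzs
  have hgzx : g z - g x = (f z - f x) - deriv f z * (z - x) := by
    simp only [hgdef]; ring
  have habs : ‖deriv f z - (f z - f x) / (z - x)‖ = ‖g z - g x‖ / ‖z - x‖ := by
    rw [hgzx]
    rw [show deriv f z - (f z - f x) / (z - x)
        = -((f z - f x - deriv f z * (z - x)) / (z - x)) by field_simp; ring]
    rw [norm_neg, norm_div]
  have hnorm_pos : (0 : ℝ) < ‖z - x‖ := by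
    rw [norm_pos_iff]; exact hzx
  rw [habs]
  rw [div_lt_iff₀ hnorm_pos]
  calc ‖g z - g x‖ ≤ (ε / 2) * ‖z - x‖ := key
    _ < ε * ‖z - x‖ := by
        apply mul_lt_mul_of_pos_right _ hnorm_pos
        linarith
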